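/- arXiv:2207.08459 — 2 statements merged into one kernel-verified Lean document; each statement's English description precedes it below -/
import Mathlib

section
/- Let ((L,≤_L),(P_n)_{n∈ℕ}) be a well-structured x–y grain line in a graph G, and let v ∈ L with x <_L v <_L y, where d is the P-depth of v. Then v together with the (finitely many) edges of ⋃P of P-depth at most d separates [x,v)_L from (v,y]_L in ⋃P; that is, every path in ⋃P from a vertex of [x,v)_L to a vertex of (v,y]_L either contains v or contains an edge of P-depth at most d. -/
open SimpleGraph

/-- Two walks (with arbitrary endpoints) are edge-disjoint. -/
def EdgeDisjW {V : Type*} {G : SimpleGraph V} {a b c d : V}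
    (p : G.Walk a b) (q : G.Walk c d) : Prop :=
  ∀ e, e ∈ p.edges → e ∉ q.edges

/-- A graph is infinitely edge-connected: it has at least two vertices and
between any two distinct vertices there are infinitely many pairwise
edge-disjoint paths. -/
def InfEdgeConn {V : Type*} (G : SimpleGraph V) : Prop :=
  (∃ u v : V, u ≠ v) ∧
    ∀ u v : V, u ≠ v →
      ∃ P : ℕ → G.Walk u v,
        (∀ n, (P n).IsPath) ∧ ∀ m n, m ≠ n → EdgeDisjW (P m) (P n)

/-- Infinite edge-connectivity of the subgraph spanned by a vertex set `S`
(used for graphs of the form "union of a family of paths", whose abstract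
vertex set is `S`). -/
def InfEdgeConnOn {V : Type*} (G : SimpleGraph V) (S : Set V) : Prop :=
  (∃ u ∈ S, ∃ v ∈ S, u ≠ v) ∧
    ∀ u ∈ S, ∀ v ∈ S, u ≠ v →
      ∃ P : ℕ → G.Walk u v,
        (∀ n, (P n).IsPath) ∧ ∀ m n, m ≠ n → EdgeDisjW (P m) (P n)

/-- `α` together with the family of paths `P` (one for each edge of `H`)
is a strong immersion of `H` in `G`. -/
def IsStrongImmersion {VH VG : Type*} (H : SimpleGraph VH) (G : SimpleGraph VG)
    (α : VH → VG) (P : ∀ ⦃u v : VH⦄, H.Adj u v → G.Walk (α u) (α v)) : Prop :=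
  Function.Injective α ∧
  (∀ ⦃u v : VH⦄ (h : H.Adj u v), (P h).IsPath) ∧
  (∀ ⦃u v u' v' : VH⦄ (h : H.Adj u v) (h' : H.Adj u' v'),
      s(u, v) ≠ s(u', v') → EdgeDisjW (P h) (P h')) ∧
  (∀ ⦃u v : VH⦄ (h : H.Adj u v), ∀ w ∈ (P h).support,
      (∃ z, α z = w) → w = α u ∨ w = α v)

/-- `H` is strongly immersed in `G`. -/
def StronglyImmersed {VH VG : Type*} (H : SimpleGraph VH) (G : SimpleGraph VG) : Prop :=
  ∃ α P, IsStrongImmersion H G α P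

/-- `β` together with the family of paths `P` witnesses that `G` contains
a subdivision of `H`: the paths are internally disjoint and have no internal
vertex among the branch vertices. -/
def IsSubdivision {VH VG : Type*} (H : SimpleGraph VH) (G : SimpleGraph VG)
    (β : VH → VG) (P : ∀ ⦃u v : VH⦄, H.Adj u v → G.Walk (β u) (β v)) : Prop :=
  Function.Injective β ∧
  (∀ ⦃u v : VH⦄ (h : H.Adj u v), (P h).IsPath) ∧
  (∀ ⦃u v u' v' : VH⦄ (h : H.Adj u v) (h' : H.Adj u' v'),
      s(u, v) ≠ s(u', v') → ∀ w, w ∈ (P h).support → w ∈ (P h').support →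
        (w = β u ∨ w = β v) ∧ (w = β u' ∨ w = β v')) ∧
  (∀ ⦃u v : VH⦄ (h : H.Adj u v), ∀ w ∈ (P h).support,
      (∃ z, β z = w) → w = β u ∨ w = β v)

/-- `H` is a topological minor of `G`. -/
def TopMinor {VH VG : Type*} (H : SimpleGraph VH) (G : SimpleGraph VG) : Prop :=
  ∃ β P, IsSubdivision H G β P

/-- The dyadic rationals of the unit interval: the vertices of the halved
Farey graph. -/
def DyadicSet : Set ℚ := {q | ∃ n k : ℕ, k ≤ 2 ^ n ∧ q = (k : ℚ) / 2 ^ n}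

/-- The halved Farey graph: two dyadic rationals of `[0,1]` are adjacent iff
they are of the form `k/2^n` and `(k+1)/2^n`. -/
def halvedFarey : SimpleGraph DyadicSet where
  Adj a b := a ≠ b ∧ ∃ n k : ℕ, k + 1 ≤ 2 ^ n ∧
    ((a.1 = (k : ℚ) / 2 ^ n ∧ b.1 = ((k : ℚ) + 1) / 2 ^ n) ∨
     (b.1 = (k : ℚ) / 2 ^ n ∧ a.1 = ((k : ℚ) + 1) / 2 ^ n))
  symm := by
    constructor
    rintro a b ⟨hne, n, k, hk, h⟩
    exact ⟨hne.symm, n, k, hk, h.symm⟩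
  loopless := by constructor; rintro a ⟨hne, -⟩; exact hne rfl

/-- Adjacency in the Farey graph on `ℚ ∪ {∞}` (`none` is `∞ = ±1/0`). -/
def fareyAdj : Option ℚ → Option ℚ → Prop
  | some q, some r =>
      q.num * (r.den : ℤ) - r.num * (q.den : ℤ) = 1 ∨
      q.num * (r.den : ℤ) - r.num * (q.den : ℤ) = -1
  | some q, none => q.den = 1
  | none, some r => r.den = 1
  | none, none => False

/-- The Farey graph. -/
def fareyGraph : SimpleGraph (Option ℚ) where
  Adj := fareyAdj
  symm := by
    constructor
    rintro (_ | q) (_ | r) h <;> simp only [fareyAdj] at * <;> omega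
  loopless := by
    constructor
    rintro (_ | q) h <;> simp only [fareyAdj] at h <;> omega
/-- `u` occurs strictly before `v` on the list `l`. -/
def Before {V : Type*} (l : List V) (u v : V) : Prop := List.Sublist [u, v] l

/-- `l` is the (consecutive) portion of the list `R` starting at `u` and
ending at `v`. -/
def IsPortion {V : Type*} (R : List V) (u v : V) (l : List V) : Prop :=
  (∃ pre post, R = pre ++ l ++ post) ∧ l.head? = some u ∧ l.getLast? = some v

/-- The union of a family of walks, as a graph on the ambient vertex set
(its abstract vertex set is `walkSupp P`). -/
def walkUnion {V : Type*} {G : SimpleGraph V} {x y : V}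
    (P : ℕ → G.Walk x y) : SimpleGraph V where
  Adj u v := ∃ n, s(u, v) ∈ (P n).edges
  symm := by
    constructor
    rintro u v ⟨n, h⟩
    exact ⟨n, by rwa [Sym2.eq_swap]⟩
  loopless := by
    constructor
    rintro v ⟨n, h⟩
    exact G.loopless.irrefl v ((P n).edges_subset_edgeSet h)

/-- The vertices appearing on some walk of the family. -/
def walkSupp {V : Type*} {G : SimpleGraph V} {x y : V}
    (P : ℕ → G.Walk x y) : Set V := {v | ∃ n, v ∈ (P n).support}

/-- An `x`–`y` grain line in `G`. -/
structure GrainLine {V : Type*} (G : SimpleGraph V) (x y : V) where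
  ne_xy : x ≠ y
  /-- The limit set `L`. -/
  L : Set V
  /-- The linear order `≤_L` on `L`. -/
  le : V → V → Prop
  /-- The pairwise edge-disjoint `x`–`y` paths. -/
  P : ℕ → G.Walk x y
  isPath : ∀ n, (P n).IsPath
  edgeDisj : ∀ m n, m ≠ n → EdgeDisjW (P m) (P n)
  le_refl : ∀ v ∈ L, le v v
  le_trans : ∀ u ∈ L, ∀ v ∈ L, ∀ w ∈ L, le u v → le v w → le u w
  le_antisymm : ∀ u ∈ L, ∀ v ∈ L, le u v → le v u → u = v
  le_total : ∀ u ∈ L, ∀ v ∈ L, le u v ∨ le v u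
  x_mem : x ∈ L
  y_mem : y ∈ L
  x_min : ∀ v ∈ L, le x v
  y_max : ∀ v ∈ L, le v y
  /-- (GL1): `L` is the set of vertices lying on a final segment of the paths. -/
  gl1 : ∀ v : V, v ∈ L ↔ ∃ N : ℕ, ∀ n : ℕ, v ∈ (P n).support ↔ N ≤ n
  /-- (GL2): a vertex of some path not in `L` lies on no other path. -/
  gl2 : ∀ n : ℕ, ∀ v ∈ (P n).support, v ∉ L → ∀ m : ℕ, m ≠ n → v ∉ (P m).support
  /-- (GL3): for `n ≥ 1`, the path `P n` traverses the vertices of `L_{<n}`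
  in the order given by `≤_L`. -/
  gl3 : ∀ n : ℕ, 1 ≤ n → ∀ u v : V, u ∈ L → v ∈ L →
      (∃ m < n, u ∈ (P m).support) → (∃ m < n, v ∈ (P m).support) →
      u ≠ v → (le u v ↔ Before (P n).support u v)

namespace GrainLine

variable {V : Type*} {G : SimpleGraph V} {x y : V}

/-- The graph `⋃𝒫` defined by the grain line. -/
def union (gl : GrainLine G x y) : SimpleGraph V := walkUnion gl.P

/-- The vertex set of `⋃𝒫`. -/
def supp (gl : GrainLine G x y) : Set V := walkSupp gl.P

/-- The set `L_{<n}` of vertices of `L` of depth `< n`. -/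
def Llt (gl : GrainLine G x y) (n : ℕ) : Set V :=
  {v | v ∈ gl.L ∧ ∃ m < n, v ∈ (gl.P m).support}

/-- The `𝒫`-depth of a vertex. -/
noncomputable def vDepth (gl : GrainLine G x y) (v : V) : ℕ :=
  sInf {n | v ∈ (gl.P n).support}

/-- The `𝒫`-depth of an edge. -/
noncomputable def eDepth (gl : GrainLine G x y) (e : Sym2 V) : ℕ :=
  sInf {n | e ∈ (gl.P n).edges}

/-- `u` and `v` are the ends of a `𝒫`-segment of depth `d`: both lie in
`L_{<d}` and `v` is the successor of `u` in `(L_{<d}, ≤_L)`. -/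
def IsSegEnds (gl : GrainLine G x y) (d : ℕ) (u v : V) : Prop :=
  u ∈ gl.Llt d ∧ v ∈ gl.Llt d ∧ u ≠ v ∧ gl.le u v ∧
    ∀ z ∈ gl.Llt d, gl.le u z → gl.le z v → z = u ∨ z = v

/-- The grain line is well-structured: every vertex of a `𝒫`-segment
`u P_d v` lying in `L` belongs to the interval `[u,v]` of `(L, ≤_L)`. -/
def WellStructured (gl : GrainLine G x y) : Prop :=
  ∀ d u v, gl.IsSegEnds d u v →
    ∀ w ∈ gl.L, (w = u ∨ w = v ∨ List.Sublist [u, w, v] (gl.P d).support) →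
      gl.le u w ∧ gl.le w v

/-- The grain line is free: the graph `⋃𝒫` it defines is infinitely
edge-connected. -/
def Free (gl : GrainLine G x y) : Prop := InfEdgeConnOn gl.union gl.supp

/-- The grain line is wildly presented. -/
def WildlyPresented (gl : GrainLine G x y) : Prop :=
  ∀ n : ℕ, 1 ≤ n → ∀ u v : V, u ∈ gl.Llt n → v ∈ gl.Llt n → u ≠ v → gl.le u v →
    ∃ w ∈ gl.L, w ≠ u ∧ w ≠ v ∧ gl.le u w ∧ gl.le w v ∧
      List.Sublist [u, w, v] (gl.P n).support

end GrainLine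

/-- `G` is a generalised halved Farey graph: it is defined by a grain line
satisfying (GL2') and (GL3'). -/
def IsGenHalvedFarey {V : Type*} (G : SimpleGraph V) : Prop :=
  ∃ (x y : V) (gl : GrainLine G x y),
    (∀ v : V, v ∈ gl.L) ∧
    (∀ u v : V, gl.le u v ↔ (u = v ∨ ∃ n, Before (gl.P n).support u v)) ∧
    (∀ u v : V, G.Adj u v ↔ ∃ n, s(u, v) ∈ (gl.P n).edges)
/-- `{A, B}` is a compound-separation of `G`. -/
def IsCompoundSep {V : Type*} (G : SimpleGraph V) (A B : Set V) : Prop :=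
  A ∪ B = Set.univ ∧ (A \ B).Nonempty ∧ (B \ A).Nonempty ∧ (A ∩ B).Finite ∧
    {p : V × V | G.Adj p.1 p.2 ∧ p.1 ∈ A \ B ∧ p.2 ∈ B \ A}.Finite

/-- The separation `{A, B}` separates the vertices `u` and `v`. -/
def SepPair {V : Type*} (A B : Set V) (u v : V) : Prop :=
  (u ∈ A \ B ∧ v ∈ B \ A) ∨ (u ∈ B \ A ∧ v ∈ A \ B)

/-- The compound-separation `{A, B}` separates `u` and `v` minimally. -/
def MinSeps {V : Type*} (G : SimpleGraph V) (A B : Set V) (u v : V) : Prop :=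
  SepPair A B u v ∧
    ∀ C D : Set V, IsCompoundSep G C D → C ∩ D ⊂ A ∩ B → ¬ SepPair C D u v

/-- `{A, B}` is a unitary compound-separation of `G` with separator `w`. -/
def IsUnitaryCSep {V : Type*} (G : SimpleGraph V) (A B : Set V) (w : V) : Prop :=
  IsCompoundSep G A B ∧ A ∩ B = {w}

/-- `w` is a compound-cutvertex of `G`. -/
def IsCompoundCutvertex {V : Type*} (G : SimpleGraph V) (w : V) : Prop :=
  ∃ A B, IsUnitaryCSep G A B w

/-- `G` is `k`-compound-connected: no compound-separation of order `< k`
separates any two vertices. -/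
def kCompConn {V : Type*} (G : SimpleGraph V) (k : ℕ) : Prop :=
  ∀ A B : Set V, IsCompoundSep G A B → (A ∩ B).ncard < k →
    ∀ u v : V, ¬ SepPair A B u v

/-- `u` and `v` cannot be separated by deleting finitely many edges. -/
def FinEdgeConn {V : Type*} (G : SimpleGraph V) (u v : V) : Prop :=
  ∀ F : Set (Sym2 V), F.Finite → (G.deleteEdges F).Reachable u v

/-- `G` is a Π-graph: it is infinitely edge-connected but has no two vertices
linked by infinitely many pairwise internally disjoint paths. -/
def PiGraph {V : Type*} (G : SimpleGraph V) : Prop :=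
  InfEdgeConn G ∧
    ∀ u v : V, u ≠ v →
      ¬ ∃ P : ℕ → G.Walk u v, (∀ n, (P n).IsPath) ∧
          ∀ m n, m ≠ n → ∀ w ∈ (P m).support, w ∈ (P n).support → w = u ∨ w = v

/-- `H` is a `k`-bounded minor of `G`: there are disjoint nonempty connected
branch sets of size `< k`. -/
def IsBddMinor {VH VG : Type*} (H : SimpleGraph VH) (G : SimpleGraph VG) (k : ℕ) : Prop :=
  ∃ B : VH → Set VG,
    (∀ h, (B h).Nonempty) ∧
    (∀ h, (B h).Finite ∧ (B h).ncard < k) ∧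
    (∀ h h', h ≠ h' → Disjoint (B h) (B h')) ∧
    (∀ h, (G.induce (B h)).Connected) ∧
    (∀ h h', H.Adj h h' → ∃ a ∈ B h, ∃ b ∈ B h', G.Adj a b)

/-- The order on oriented separations: `(A,B) ≤ (C,D)` iff `A ⊆ C` and `D ⊆ B`. -/
def osLE {V : Type*} (s t : Set V × Set V) : Prop := s.1 ⊆ t.1 ∧ t.2 ⊆ s.2

/-- The reverse orientation of an oriented separation. -/
def swapSep {V : Type*} (s : Set V × Set V) : Set V × Set V := (s.2, s.1)

/-- Two (unordered) separations, given by representative orientations, are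
nested: they have comparable orientations. -/
def NestedSep {V : Type*} (s t : Set V × Set V) : Prop :=
  osLE s t ∨ osLE t s ∨ osLE s (swapSep t) ∨ osLE (swapSep s) t

/-- `σ` is an orientation of the set `N` of separations which is a star. -/
def IsStarOrientation {V : Type*} (N σ : Set (Set V × Set V)) : Prop :=
  (∀ s ∈ N, s ∈ σ ∨ swapSep s ∈ σ) ∧
  (∀ s ∈ N, ¬ (s ∈ σ ∧ swapSep s ∈ σ)) ∧
  (∀ t ∈ σ, t ∈ N ∨ swapSep t ∈ N) ∧
  (∀ s ∈ σ, ∀ t ∈ σ, s ≠ t → osLE s (swapSep t))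

/-- The set `N` of unitary compound-separations is faithful to the
compound-cutvertex `w` in `G`. -/
def FaithfulToVert {V : Type*} (G : SimpleGraph V) (N : Set (Set V × Set V)) (w : V) : Prop :=
  (∃ σ, IsStarOrientation {s ∈ N | s.1 ∩ s.2 = {w}} σ) ∧
  ∀ u v : V, (∃ A B, IsUnitaryCSep G A B w ∧ SepPair A B u v) →
    ∃ s ∈ N, s.1 ∩ s.2 = {w} ∧ SepPair s.1 s.2 u v

/-- The set `N` of unitary compound-separations is faithful to `G`. -/
def FaithfulSet {V : Type*} (G : SimpleGraph V) (N : Set (Set V × Set V)) : Prop :=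
  ∀ w : V, IsCompoundCutvertex G w → FaithfulToVert G N w

/-- A set of graphs is typical for the class of infinitely edge-connected
graphs with regard to the topological minor relation. -/
def TypicalTopMinor (𝓗 : Set (Σ V : Type, SimpleGraph V)) : Prop :=
  ∀ (W : Type) (G : SimpleGraph W), InfEdgeConn G → ∃ H ∈ 𝓗, TopMinor H.2 G

section AuxList

variable {α : Type*}

private lemma before_of_lt' {l : List α} {i j : Fin l.length} (h : (i : ℕ) < j) :
    Before l (l.get i) (l.get j) := by
  have hm : [l.get i, l.get j] = List.map (fun k : Fin l.length => l[k]) [i, j] := by simp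
  rw [Before, hm]
  refine List.map_getElem_sublist (List.pairwise_cons.2 ⟨?_, List.pairwise_singleton _ _⟩)
  intro a ha
  rw [List.mem_singleton] at ha
  subst ha
  exact h

private lemma before_indices {l : List α} {u v : α} (h : Before l u v) :
    ∃ i j : Fin l.length, (i : ℕ) < j ∧ l.get i = u ∧ l.get j = v := by
  obtain ⟨is, he, hp⟩ := List.sublist_eq_map_getElem h
  rcases is with _ | ⟨p, _ | ⟨q, _ | ⟨r, tl⟩⟩⟩ <;> simp at he
  obtain ⟨h1, h2⟩ := he
  refine ⟨p, q, ?_, by rw [List.get_eq_getElem]; exact h1.symm, by rw [List.get_eq_getElem]; exact h2.symm⟩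
  simpa using List.pairwise_cons.1 hp |>.1 q (by simp)

private lemma lt_of_before' {l : List α} (hnd : l.Nodup) {i j : Fin l.length}
    (h : Before l (l.get i) (l.get j)) : (i : ℕ) < j := by
  obtain ⟨p, q, hpq, hgp, hgq⟩ := before_indices h
  have hinj := List.nodup_iff_injective_get.1 hnd
  have h1 : p = i := hinj hgp
  have h2 : q = j := hinj hgq
  subst h1; subst h2; exact hpq

private lemma before_asymm' {l : List α} (hnd : l.Nodup) {a b : α}
    (h1 : Before l a b) (h2 : Before l b a) : False := by
  obtain ⟨i, hi⟩ := List.mem_iff_get.1 (h1.subset (by simp) : a ∈ l)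
  obtain ⟨j, hj⟩ := List.mem_iff_get.1 (h1.subset (by simp) : b ∈ l)
  rw [← hi, ← hj] at h1 h2
  have := lt_of_before' hnd h1
  have := lt_of_before' hnd h2
  omega

private lemma before_trans' {l : List α} (hnd : l.Nodup) {a b c : α}
    (h1 : Before l a b) (h2 : Before l b c) : Before l a c := by
  obtain ⟨i, hi⟩ := List.mem_iff_get.1 (h1.subset (by simp) : a ∈ l)
  obtain ⟨j, hj⟩ := List.mem_iff_get.1 (h1.subset (by simp) : b ∈ l)
  obtain ⟨k, hk⟩ := List.mem_iff_get.1 (h2.subset (by simp) : c ∈ l)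
  rw [← hi, ← hj] at h1
  rw [← hj, ← hk] at h2
  have hij := lt_of_before' hnd h1
  have hjk := lt_of_before' hnd h2
  rw [← hi, ← hk]
  exact before_of_lt' (hij.trans hjk)

private lemma sublist3_of_lt {l : List α} {i j k : Fin l.length}
    (h1 : (i : ℕ) < j) (h2 : (j : ℕ) < k) :
    List.Sublist [l.get i, l.get j, l.get k] l := by
  have hm : [l.get i, l.get j, l.get k] = List.map (fun k : Fin l.length => l[k]) [i, j, k] := by simp
  rw [hm]
  refine List.map_getElem_sublist (List.pairwise_cons.2 ⟨?_, List.pairwise_cons.2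
    ⟨?_, List.pairwise_singleton _ _⟩⟩)
  · intro a ha
    rcases List.mem_cons.1 ha with rfl | ha
    · exact h1
    · rw [List.mem_singleton] at ha; subst ha; exact h1.trans h2
  · intro a ha
    rw [List.mem_singleton] at ha; subst ha; exact h2

private lemma before_step {l₁ l₂ : List α} {a b v : α}
    (hnd : (l₁ ++ a :: b :: l₂).Nodup) (hvb : v ≠ b)
    (hab : Before (l₁ ++ a :: b :: l₂) a v) : Before (l₁ ++ a :: b :: l₂) b v := by
  set l := l₁ ++ a :: b :: l₂ with hl
  have hlen : l.length = l₁.length + l₂.length + 2 := by simp [hl]; omega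
  have h1 : l₁.length < l.length := by omega
  have h2 : l₁.length + 1 < l.length := by omega
  have hga : l.get ⟨l₁.length, h1⟩ = a := by simp [hl, List.getElem_append_right]
  have hgb : l.get ⟨l₁.length + 1, h2⟩ = b := by simp [hl, List.getElem_append_right]
  obtain ⟨p, q, hpq, hgp, hgq⟩ := before_indices hab
  have hinj := List.nodup_iff_injective_get.1 hnd
  have hp : (p : ℕ) = l₁.length := by
    have := hinj (hgp.trans hga.symm); exact congrArg Fin.val this
  have hqne : (q : ℕ) ≠ l₁.length + 1 := by
    intro h
    exact hvb (by rw [← hgq, ← hgb]; congr 1; exact Fin.ext h)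
  have hlt : (l₁.length + 1 : ℕ) < q := by omega
  have := before_of_lt' (l := l) (i := ⟨l₁.length + 1, h2⟩) (j := q) hlt
  rwa [hgb, hgq] at this

private lemma before_step' {l₁ l₂ : List α} {a b v : α}
    (hnd : (l₁ ++ b :: a :: l₂).Nodup)
    (hab : Before (l₁ ++ b :: a :: l₂) a v) : Before (l₁ ++ b :: a :: l₂) b v := by
  set l := l₁ ++ b :: a :: l₂ with hl
  have hlen : l.length = l₁.length + l₂.length + 2 := by simp [hl]; omega
  have h1 : l₁.length < l.length := by omega
  have h2 : l₁.length + 1 < l.length := by omega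
  have hgb : l.get ⟨l₁.length, h1⟩ = b := by simp [hl, List.getElem_append_right]
  have hga : l.get ⟨l₁.length + 1, h2⟩ = a := by simp [hl, List.getElem_append_right]
  obtain ⟨p, q, hpq, hgp, hgq⟩ := before_indices hab
  have hinj := List.nodup_iff_injective_get.1 hnd
  have hp : (p : ℕ) = l₁.length + 1 := by
    have := hinj (hgp.trans hga.symm); exact congrArg Fin.val this
  have hlt : (l₁.length : ℕ) < q := by omega
  have := before_of_lt' (l := l) (i := ⟨l₁.length, h1⟩) (j := q) hlt
  rwa [hgb, hgq] at this

end AuxList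

section AuxWalk

variable {V : Type*} {G : SimpleGraph V}

private lemma walk_before_start {a b : V} (p : G.Walk a b) :
    ∀ w ∈ p.support, w ≠ a → Before p.support a w := by
  cases p with
  | nil =>
    intro w hw hne
    simp [SimpleGraph.Walk.support_nil] at hw
    exact absurd hw hne
  | cons h q =>
    intro w hw hne
    rw [SimpleGraph.Walk.support_cons] at hw ⊢
    rcases List.mem_cons.1 hw with rfl | hw
    · exact absurd rfl hne
    · exact (List.singleton_sublist.2 hw).cons₂ _

private lemma walk_before_end {a b : V} (p : G.Walk a b) :
    ∀ w ∈ p.support, w ≠ b → Before p.support w b := by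
  induction p with
  | nil =>
    intro w hw hne
    simp [SimpleGraph.Walk.support_nil] at hw
    exact absurd hw hne
  | cons h q ih =>
    intro w hw hne
    rw [SimpleGraph.Walk.support_cons] at hw ⊢
    rcases List.mem_cons.1 hw with rfl | hw
    · exact (List.singleton_sublist.2 q.end_mem_support).cons₂ _
    · exact ((ih w hw hne).cons _)

private lemma walk_edge_consec {s t : V} (p : G.Walk s t) :
    ∀ a b : V, s(a, b) ∈ p.edges →
      (∃ l₁ l₂, p.support = l₁ ++ a :: b :: l₂) ∨
      (∃ l₁ l₂, p.support = l₁ ++ b :: a :: l₂) := by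
  induction p with
  | nil => intro a b h; simp at h
  | @cons u c t h q ih =>
    intro a b hab
    rw [SimpleGraph.Walk.edges_cons, List.mem_cons] at hab
    rcases hab with hab | hab
    · rw [Sym2.eq_iff] at hab
      rcases hab with ⟨rfl, rfl⟩ | ⟨rfl, rfl⟩
      · exact Or.inl ⟨[], q.support.tail, by
          rw [SimpleGraph.Walk.support_cons, q.support_eq_cons]; rfl⟩
      · exact Or.inr ⟨[], q.support.tail, by
          rw [SimpleGraph.Walk.support_cons, q.support_eq_cons]; rfl⟩
    · rcases ih a b hab with ⟨l₁, l₂, hq⟩ | ⟨l₁, l₂, hq⟩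
      · exact Or.inl ⟨u :: l₁, l₂, by rw [SimpleGraph.Walk.support_cons, hq]; rfl⟩
      · exact Or.inr ⟨u :: l₁, l₂, by rw [SimpleGraph.Walk.support_cons, hq]; rfl⟩

end AuxWalk

/-- Core lemma: for a vertex `w ∈ L` on a path `P n` of index above the depth of
`v`, the order `≤_L` between `w` and `v` agrees with the traversal order of `P n`. -/
private lemma gl_core {V : Type*} {G : SimpleGraph V} {x y : V}
    (gl : GrainLine G x y) (hws : gl.WellStructured)
    {v : V} (hv : v ∈ gl.L) {d : ℕ} (hvd : v ∈ (gl.P d).support)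
    {n : ℕ} (hn : d < n) {w : V} (hw : w ∈ gl.L)
    (hwn : w ∈ (gl.P n).support) (hwv : w ≠ v) :
    (gl.le w v ↔ Before (gl.P n).support w v) := by
  classical
  by_cases hcase : ∃ m < n, w ∈ (gl.P m).support
  · exact gl.gl3 n (by omega) w v hw hv hcase ⟨d, hn, hvd⟩ hwv
  · have hvlt : v ∈ gl.Llt n := ⟨hv, d, hn, hvd⟩
    have hnd : (gl.P n).support.Nodup := (gl.isPath n).support_nodup
    have hinj : Function.Injective (gl.P n).support.get :=
      List.nodup_iff_injective_get.1 hnd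
    have hwx : w ≠ x := fun h => hcase ⟨0, by omega, h ▸ (gl.P 0).start_mem_support⟩
    have hwy : w ≠ y := fun h => hcase ⟨0, by omega, h ▸ (gl.P 0).end_mem_support⟩
    have hxLlt : x ∈ gl.Llt n := ⟨gl.x_mem, 0, by omega, (gl.P 0).start_mem_support⟩
    have hyLlt : y ∈ gl.Llt n := ⟨gl.y_mem, 0, by omega, (gl.P 0).end_mem_support⟩
    set l := (gl.P n).support with hldef
    obtain ⟨i, hi⟩ := List.mem_iff_get.1 hwn
    obtain ⟨ix, hix⟩ := List.mem_iff_get.1 ((gl.P n).start_mem_support : x ∈ l)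
    obtain ⟨iy, hiy⟩ := List.mem_iff_get.1 ((gl.P n).end_mem_support : y ∈ l)
    have hxi : (ix : ℕ) < i := lt_of_before' hnd
      (by rw [hix, hi]; exact walk_before_start (gl.P n) w hwn hwx)
    have hiy' : (i : ℕ) < iy := lt_of_before' hnd
      (by rw [hi, hiy]; exact walk_before_end (gl.P n) w hwn hwy)
    obtain ⟨j₁, ⟨hj₁L, hj₁i⟩, hj₁max⟩ :
        ∃ j : Fin l.length, (l.get j ∈ gl.Llt n ∧ (j : ℕ) < i) ∧
          ∀ k : Fin l.length, l.get k ∈ gl.Llt n → (k : ℕ) < i → (k : ℕ) ≤ (j : ℕ) := by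
      set A : Finset (Fin l.length) :=
        Finset.univ.filter (fun j => l.get j ∈ gl.Llt n ∧ (j : ℕ) < i) with hAdef
      have hA : A.Nonempty := ⟨ix, by
        simp only [hAdef, Finset.mem_filter, Finset.mem_univ, true_and]
        exact ⟨by rw [hix]; exact hxLlt, hxi⟩⟩
      refine ⟨A.max' hA, ?_, ?_⟩
      · have := A.max'_mem hA
        simpa only [hAdef, Finset.mem_filter, Finset.mem_univ, true_and] using this
      · intro k hk1 hk2
        exact Fin.le_def.mp (A.le_max' k (by
          simp only [hAdef, Finset.mem_filter, Finset.mem_univ, true_and]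
          exact ⟨hk1, hk2⟩))
    obtain ⟨j₂, ⟨hj₂L, hij₂⟩, hj₂min⟩ :
        ∃ j : Fin l.length, (l.get j ∈ gl.Llt n ∧ (i : ℕ) < (j : ℕ)) ∧
          ∀ k : Fin l.length, l.get k ∈ gl.Llt n → (i : ℕ) < (k : ℕ) → (j : ℕ) ≤ (k : ℕ) := by
      set B : Finset (Fin l.length) :=
        Finset.univ.filter (fun j => l.get j ∈ gl.Llt n ∧ (i : ℕ) < j) with hBdef
      have hB : B.Nonempty := ⟨iy, by
        simp only [hBdef, Finset.mem_filter, Finset.mem_univ, true_and]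
        exact ⟨by rw [hiy]; exact hyLlt, hiy'⟩⟩
      refine ⟨B.min' hB, ?_, ?_⟩
      · have := B.min'_mem hB
        simpa only [hBdef, Finset.mem_filter, Finset.mem_univ, true_and] using this
      · intro k hk1 hk2
        exact Fin.le_def.mp (B.min'_le k (by
          simp only [hBdef, Finset.mem_filter, Finset.mem_univ, true_and]
          exact ⟨hk1, hk2⟩))
    set u := l.get j₁ with hudef
    set u' := l.get j₂ with hu'def
    have huLlt : u ∈ gl.Llt n := hj₁L
    have hu'Llt : u' ∈ gl.Llt n := hj₂L
    have hord : ∀ z z' : V, z ∈ gl.Llt n → z' ∈ gl.Llt n → z ≠ z' →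
        (gl.le z z' ↔ Before l z z') :=
      fun z z' hz hz' hne => gl.gl3 n (by omega) z z' hz.1 hz'.1 hz.2 hz'.2 hne
    have hne_uu' : u ≠ u' := by
      intro h
      have := congrArg Fin.val (hinj (hudef ▸ hu'def ▸ h))
      omega
    have hle_uu' : gl.le u u' := (hord u u' huLlt hu'Llt hne_uu').2
      (by rw [hudef, hu'def]; exact before_of_lt' (by omega))
    have hseg : gl.IsSegEnds n u u' := by
      refine ⟨huLlt, hu'Llt, hne_uu', hle_uu', ?_⟩
      intro z hz hle1 hle2
      by_contra hcon
      push_neg at hcon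
      obtain ⟨hzu, hzu'⟩ := hcon
      have hb1 : Before l u z := (hord u z huLlt hz (Ne.symm hzu)).1 hle1
      have hb2 : Before l z u' := (hord z u' hz hu'Llt hzu').1 hle2
      have hzl : z ∈ l := hb1.subset (by simp)
      obtain ⟨k, hk⟩ := List.mem_iff_get.1 hzl
      have h1 : (j₁ : ℕ) < k := lt_of_before' hnd (by rw [hk, ← hudef]; exact hb1)
      have h2 : (k : ℕ) < j₂ := lt_of_before' hnd (by rw [hk, ← hu'def]; exact hb2)
      have hki : (k : ℕ) ≠ i := by
        intro he
        apply hcase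
        have hzw : z = w := by rw [← hk, ← hi]; congr 1; exact Fin.ext he
        obtain ⟨m, hm, hmem⟩ := hz.2
        exact ⟨m, hm, hzw ▸ hmem⟩
      rcases Nat.lt_or_ge (k : ℕ) i with hlt | hge
      · have := hj₁max k (by rw [hk]; exact hz) hlt
        omega
      · have hgt : (i : ℕ) < k := by omega
        have := hj₂min k (by rw [hk]; exact hz) hgt
        omega
    have hsub : List.Sublist [u, w, u'] l := by
      rw [hudef, hu'def, ← hi]
      exact sublist3_of_lt (by omega) (by omega)
    obtain ⟨hle_uw, hle_wu'⟩ := hws n u u' hseg w hw (Or.inr (Or.inr hsub))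
    have huL : u ∈ gl.L := huLlt.1
    have hu'L : u' ∈ gl.L := hu'Llt.1
    constructor
    · intro hlewv
      rcases eq_or_ne u' v with heq | hneu'v
      · rw [← heq, hu'def, ← hi]
        exact before_of_lt' (by omega)
      · rcases gl.le_total u' hu'L v hv with h1 | h2
        · have hb1 : Before l u' v := (hord u' v hu'Llt hvlt hneu'v).1 h1
          have hb2 : Before l w u' := by
            rw [← hi, hu'def]; exact before_of_lt' (by omega)
          exact before_trans' hnd hb2 hb1
        · have hle_uv : gl.le u v := gl.le_trans u huL w hw v hv hle_uw hlewv
          rcases hseg.2.2.2.2 v hvlt hle_uv h2 with heq | heq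
          · have hwu : gl.le w u := heq ▸ hlewv
            exact absurd (gl.le_antisymm w hw u huL hwu hle_uw)
              (fun h => hcase (by
                obtain ⟨m, hm, hmem⟩ := huLlt.2
                exact ⟨m, hm, h ▸ hmem⟩))
          · exact absurd heq.symm hneu'v
    · intro hbef
      by_contra hno
      have hlevw : gl.le v w := (gl.le_total w hw v hv).resolve_left hno
      rcases eq_or_ne v u with heq | hnevu
      · have hbvw : Before l v w := by
          rw [heq, hudef, ← hi]
          exact before_of_lt' (by omega)
        exact before_asymm' hnd hbef hbvw
      · rcases gl.le_total u huL v hv with h1 | h2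
        · have hle_vu' : gl.le v u' := gl.le_trans v hv w hw u' hu'L hlevw hle_wu'
          rcases hseg.2.2.2.2 v hvlt h1 hle_vu' with heq | heq
          · exact hnevu heq
          · exact hno (heq ▸ hle_wu')
        · have hb1 : Before l v u := (hord v u hvlt huLlt hnevu).1 h2
          have hb2 : Before l u w := by
            rw [← hi, hudef]; exact before_of_lt' (by omega)
          exact before_asymm' hnd (before_trans' hnd hb1 hb2) hbef

/-- in a well-structured `x`–`y` grain line, an internal vertex
`v` of depth `d` together with the edges of depth at most `d` separates
`[x,v)_L` from `(v,y]_L` in `⋃𝒫`. -/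
theorem grainline_internal_vertex_separates {V : Type*} {G : SimpleGraph V} {x y : V}
    (gl : GrainLine G x y) (hws : gl.WellStructured)
    (v : V) (hv : v ∈ gl.L) (hxv : gl.le x v) (hvx : v ≠ x)
    (hvy : gl.le v y) (hvy' : v ≠ y) (d : ℕ) (hd : d = gl.vDepth v) :
    ∀ a b : V, a ∈ gl.L → gl.le a v → a ≠ v → b ∈ gl.L → gl.le v b → b ≠ v →
      ∀ W : gl.union.Walk a b, W.IsPath →
        v ∈ W.support ∨ ∃ e ∈ W.edges, gl.eDepth e ≤ d := by
  intro a b ha hav hanv hb hvb hbnv W hW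
  by_contra hcon
  push_neg at hcon
  obtain ⟨hvW, hedge⟩ := hcon
  -- `v` lies on every path of index at least `d`
  have hmemv : ∀ k, d ≤ k → v ∈ (gl.P k).support := by
    obtain ⟨N, hN⟩ := (gl.gl1 v).1 hv
    have hNe : {n | v ∈ (gl.P n).support}.Nonempty := ⟨N, (hN N).2 le_rfl⟩
    have hdS : v ∈ (gl.P d).support := by
      have := Nat.sInf_mem hNe
      rw [hd]; exact this
    intro k hk
    exact (hN k).2 (le_trans ((hN d).1 hdS) hk)
  have hvd : v ∈ (gl.P d).support := hmemv d le_rfl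
  -- the step lemma, transferring the "before v on every deep path" property
  -- along an edge of depth `> d`
  have hstep : ∀ c e : V, gl.union.Adj c e → d < gl.eDepth s(c, e) → e ≠ v →
      (∀ n, d < n → c ∈ (gl.P n).support → Before (gl.P n).support c v) →
      (∀ n, d < n → e ∈ (gl.P n).support → Before (gl.P n).support e v) := by
    intro c e hadj hdep hev hLc
    obtain ⟨n0, hn0⟩ : ∃ k, s(c, e) ∈ (gl.P k).edges := hadj
    have hem : s(c, e) ∈ (gl.P (gl.eDepth s(c, e))).edges :=
      Nat.sInf_mem (⟨n0, hn0⟩ : {k | s(c, e) ∈ (gl.P k).edges}.Nonempty)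
    set m := gl.eDepth s(c, e) with hm
    have hvm : v ∈ (gl.P m).support := hmemv m (le_of_lt hdep)
    have hnd : (gl.P m).support.Nodup := (gl.isPath m).support_nodup
    obtain ⟨hcmem, hemem, hkey⟩ : c ∈ (gl.P m).support ∧ e ∈ (gl.P m).support ∧
        Before (gl.P m).support e v := by
      rcases walk_edge_consec (gl.P m) c e hem with ⟨l₁, l₂, hdc⟩ | ⟨l₁, l₂, hdc⟩
      · refine ⟨by rw [hdc]; simp, by rw [hdc]; simp, ?_⟩
        have hbc : Before (gl.P m).support c v := hLc m hdep (by rw [hdc]; simp)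
        rw [hdc] at hbc hnd ⊢
        exact before_step hnd (Ne.symm hev) hbc
      · refine ⟨by rw [hdc]; simp, by rw [hdc]; simp, ?_⟩
        have hbc : Before (gl.P m).support c v := hLc m hdep (by rw [hdc]; simp)
        rw [hdc] at hbc hnd ⊢
        exact before_step' hnd hbc
    intro n hn hen
    by_cases heL : e ∈ gl.L
    · have hlev : gl.le e v := (gl_core gl hws hv hvd hdep heL hemem hev).2 hkey
      exact (gl_core gl hws hv hvd hn heL hen hev).1 hlev
    · have hnm : n = m := by
        by_contra hne
        exact gl.gl2 m e hemem heL n hne hen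
      rw [hnm]
      exact hkey
  -- propagate along the walk
  have haux : ∀ (c e : V) (p : gl.union.Walk c e),
      (∀ n, d < n → c ∈ (gl.P n).support → Before (gl.P n).support c v) →
      v ∉ p.support → (∀ ed ∈ p.edges, d < gl.eDepth ed) →
      (∀ n, d < n → e ∈ (gl.P n).support → Before (gl.P n).support e v) := by
    intro c e p
    induction p with
    | nil => intro hc _ _; exact hc
    | @cons u c₂ e hadj q ih =>
      intro hc hvs hed
      rw [SimpleGraph.Walk.support_cons] at hvs
      have hvq : v ∉ q.support := fun h => hvs (List.mem_cons.2 (Or.inr h))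
      have hc₂v : c₂ ≠ v := fun h =>
        hvs (List.mem_cons.2 (Or.inr (h ▸ q.start_mem_support)))
      have hdep : d < gl.eDepth s(u, c₂) := by
        apply hed
        rw [SimpleGraph.Walk.edges_cons]
        exact List.mem_cons_self
      have hc₂ := hstep u c₂ hadj hdep hc₂v hc
      apply ih hc₂ hvq
      intro ed hmem
      exact hed ed (by rw [SimpleGraph.Walk.edges_cons]; exact List.mem_cons.2 (Or.inr hmem))
  -- the start vertex is "before v" on all deep paths
  have hLa : ∀ n, d < n → a ∈ (gl.P n).support → Before (gl.P n).support a v :=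
    fun n hn han => (gl_core gl hws hv hvd hn ha han hanv).1 hav
  have hLb := haux a b W hLa hvW hedge
  -- contradiction: `b` comes after `v`
  obtain ⟨Nb, hNb⟩ := (gl.gl1 b).1 hb
  set n := max (d + 1) Nb with hn
  have hbn : b ∈ (gl.P n).support := (hNb n).2 (le_max_right _ _)
  have hdn : d < n := lt_of_lt_of_le (Nat.lt_succ_self d) (le_max_left _ _)
  have hlebv : gl.le b v :=
    (gl_core gl hws hv hvd hdn hb hbn hbnv).2 (hLb n hdn hbn)
  exact hbnv (gl.le_antisymm b hb v hv hlebv hvb)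
end

section
/- Let G be an infinitely edge-connected graph such that K^{ℵ₀} is not strongly immersed in G. Then there is a nested set of unitary compound-separations of G which is faithful to G. -/
open SimpleGraph

namespace St14

variable {V : Type*} {G : SimpleGraph V}

lemma path_ww_nil {w : V} (p : G.Walk w w) (hp : p.IsPath) : p = Walk.nil := by
  cases p with
  | nil => rfl
  | cons h q =>
    exfalso
    have hn := hp.support_nodup
    rw [Walk.support_cons] at hn
    exact (List.nodup_cons.mp hn).1 (Walk.end_mem_support q)

lemma exists_cross_edge {S : Set V} :
    ∀ {a b : V} (p : G.Walk a b), a ∈ S → b ∉ S →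
      ∃ x y, s(x, y) ∈ p.edges ∧ x ∈ S ∧ y ∉ S := by
  intro a b p
  induction p with
  | nil => intro ha hb; exact absurd ha hb
  | @cons a c b h q ih =>
    intro ha hb
    by_cases hc : c ∈ S
    · obtain ⟨x, y, hxy, hx, hy⟩ := ih hc hb
      exact ⟨x, y, by simp only [Walk.edges_cons, List.mem_cons]; exact Or.inr hxy, hx, hy⟩
    · exact ⟨a, c, by simp [Walk.edges_cons], ha, hc⟩

lemma path_exit {S : Set V} :
    ∀ {a w : V} (p : G.Walk a w), w ∉ S → p.IsPath → a ∈ S →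
      (∀ x ∈ p.support, x ∈ S ∪ {w}) ∨
      ∃ x y, s(x, y) ∈ p.edges ∧ x ∈ S ∧ y ∉ S ∧ y ≠ w := by
  intro a w p
  induction p with
  | nil => intro hw _ ha; exact absurd ha hw
  | @cons a c w h q ih =>
    intro hw hp ha
    by_cases hc : c ∈ S
    · rcases ih hw hp.of_cons hc with hgood | ⟨x, y, hxy, h1, h2, h3⟩
      · left; intro x hx
        rw [Walk.support_cons] at hx
        rcases List.mem_cons.mp hx with h1 | h2
        · exact Or.inl (h1 ▸ ha)
        · exact hgood x h2
      · right
        exact ⟨x, y, by simp only [Walk.edges_cons, List.mem_cons]; exact Or.inr hxy, h1, h2, h3⟩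
    · by_cases hcw : c = w
      · subst hcw
        have hq : q = Walk.nil := path_ww_nil q hp.of_cons
        subst hq
        left; intro x hx
        rw [Walk.support_cons, Walk.support_nil] at hx
        rcases List.mem_cons.mp hx with h1 | h2
        · exact Or.inl (h1 ▸ ha)
        · simp only [List.mem_singleton] at h2
          exact Or.inr (by simp [h2])
      · right; exact ⟨a, c, by simp [Walk.edges_cons], ha, hc, hcw⟩

lemma fan_pigeonhole (hG : InfEdgeConn G) {u v : V} (huv : u ≠ v)
    {W : Set (Sym2 V)} (hW : W.Finite) :
    ∃ p : G.Walk u v, p.IsPath ∧ ∀ e ∈ p.edges, e ∉ W := by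
  obtain ⟨P, hP, hD⟩ := hG.2 u v huv
  by_contra hcon
  push_neg at hcon
  have hch : ∀ n : ℕ, ∃ e, e ∈ (P n).edges ∧ e ∈ W := fun n => by
    obtain ⟨e, he1, he2⟩ := hcon (P n) (hP n)
    exact ⟨e, he1, he2⟩
  choose e he hew using hch
  have hinj : Function.Injective e := by
    intro m n hmn
    by_contra hne
    exact hD m n hne (e m) (he m) (hmn ▸ he n)
  exact (Set.infinite_range_of_injective hinj) (hW.subset (Set.range_subset_iff.mpr hew))

/-- The oriented edge-boundary of a vertex set. -/
def bdry (G : SimpleGraph V) (Z : Set V) : Set (V × V) :=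
  {p | G.Adj p.1 p.2 ∧ p.1 ∈ Z ∧ p.2 ∉ Z}

lemma eq_empty_of_finite_bdry (hG : InfEdgeConn G) {Z : Set V}
    (hfin : (bdry G Z).Finite) (hc : Zᶜ.Nonempty) : Z = ∅ := by
  by_contra hne
  obtain ⟨u, hu⟩ := Set.nonempty_iff_ne_empty.mpr hne
  obtain ⟨v, hv⟩ := hc
  have huv : u ≠ v := fun h => hv (h ▸ hu)
  obtain ⟨p, hp, hgood⟩ := fan_pigeonhole hG huv (hfin.image (fun p : V × V => s(p.1, p.2)))
  obtain ⟨x, y, hxy, hx, hy⟩ := exists_cross_edge p hu hv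
  exact hgood _ hxy ⟨(x, y), ⟨p.adj_of_mem_edges hxy, hx, hy⟩, rfl⟩

/-- The set of edges leaving `X` but not into `w`. -/
def dx (G : SimpleGraph V) (w : V) (X : Set V) : Set (V × V) :=
  {p | G.Adj p.1 p.2 ∧ p.1 ∈ X ∧ p.2 ∉ X ∧ p.2 ≠ w}

/-- `X` is an admissible set for `w`: it avoids `w` and has finite boundary apart
from edges into `w`. -/
def Adm (G : SimpleGraph V) (w : V) (X : Set V) : Prop :=
  w ∉ X ∧ (dx G w X).Finite

lemma Adm.inter {w : V} {X Y : Set V} (hX : Adm G w X) (hY : Adm G w Y) :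
    Adm G w (X ∩ Y) := by
  refine ⟨fun h => hX.1 h.1, (hX.2.union hY.2).subset ?_⟩
  rintro ⟨a, b⟩ ⟨hadj, ⟨haX, haY⟩, hb, hbw⟩
  by_cases hbX : b ∈ X
  · exact Or.inr ⟨hadj, haY, fun hbY => hb ⟨hbX, hbY⟩, hbw⟩
  · exact Or.inl ⟨hadj, haX, hbX, hbw⟩

lemma Adm.compl {w : V} {X : Set V} (hX : Adm G w X) : Adm G w (X ∪ {w})ᶜ := by
  refine ⟨by simp, (hX.2.image Prod.swap).subset ?_⟩
  rintro ⟨a, b⟩ ⟨hadj, ha, hb, hbw⟩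
  simp only [Set.mem_compl_iff, Set.mem_union, Set.mem_singleton_iff, not_or] at ha hb
  push_neg at hb
  have hbX : b ∈ X := by
    by_cases hbX : b ∈ X
    · exact hbX
    · exact absurd (hb hbX) hbw
  exact ⟨(b, a), ⟨hadj.symm, hbX, ha.1, ha.2⟩, rfl⟩

lemma Adm_top (w : V) : Adm G w {w}ᶜ := by
  refine ⟨by simp, Set.finite_empty.subset ?_⟩
  rintro ⟨a, b⟩ ⟨_, _, hb, hbw⟩
  simp only [Set.mem_compl_iff, Set.mem_singleton_iff, not_not] at hb
  exact absurd hb hbw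

/-- `u` and `v` are separated at `w`. -/
def SepW (G : SimpleGraph V) (w u v : V) : Prop :=
  u ≠ w ∧ v ≠ w ∧ ∃ X, Adm G w X ∧ u ∈ X ∧ v ∉ X

/-- `u` and `v` are equivalent at `w`. -/
def EqW (G : SimpleGraph V) (w u v : V) : Prop := u ≠ w ∧ v ≠ w ∧ ¬ SepW G w u v

/-- The class of `u` at `w`. -/
def cls (G : SimpleGraph V) (w u : V) : Set V := {v | EqW G w u v}

lemma SepW.symm {w u v : V} (h : SepW G w u v) : SepW G w v u := by
  obtain ⟨hu, hv, X, hX, huX, hvX⟩ := h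
  refine ⟨hv, hu, (X ∪ {w})ᶜ, hX.compl, by simp [hvX, hv], by simp [huX]⟩

lemma EqW.refl {w u : V} (hu : u ≠ w) : EqW G w u u :=
  ⟨hu, hu, fun ⟨_, _, _, _, h1, h2⟩ => h2 h1⟩

lemma EqW.symm {w u v : V} (h : EqW G w u v) : EqW G w v u :=
  ⟨h.2.1, h.1, fun hs => h.2.2 hs.symm⟩

lemma EqW.trans {w u v z : V} (h1 : EqW G w u v) (h2 : EqW G w v z) : EqW G w u z := by
  refine ⟨h1.1, h2.2.1, fun ⟨hu, hz, X, hX, huX, hzX⟩ => ?_⟩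
  by_cases hvX : v ∈ X
  · exact h2.2.2 ⟨h1.2.1, hz, X, hX, hvX, hzX⟩
  · exact h1.2.2 ⟨hu, h1.2.1, X, hX, huX, hvX⟩

lemma mem_cls_self {w u : V} (hu : u ≠ w) : u ∈ cls G w u := EqW.refl hu

lemma cls_eq_of_eqw {w u v : V} (h : EqW G w u v) : cls G w u = cls G w v := by
  ext z
  exact ⟨fun hz => h.symm.trans hz, fun hz => h.trans hz⟩

lemma sepw_of_not_eqw {w u v : V} (hu : u ≠ w) (hv : v ≠ w) (h : ¬ EqW G w u v) :
    SepW G w u v := by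
  by_contra hs
  exact h ⟨hu, hv, hs⟩

lemma ne_w_of_mem_cls {w u v : V} (h : v ∈ cls G w u) : v ≠ w := h.2.1

lemma cls_subset_of_adm {w u : V} {X : Set V} (hX : Adm G w X) (huX : u ∈ X) (hu : u ≠ w) :
    cls G w u ⊆ X := by
  intro x hx
  by_contra hxX
  exact hx.2.2 ⟨hu, hx.2.1, X, hX, huX, hxX⟩

lemma exists_leg (hG : InfEdgeConn G) {w : V} {S : Set V} (hS : Adm G w S)
    {v : V} (hv : v ∈ S) {F : Set (Sym2 V)} (hF : F.Finite) :
    ∃ q : G.Walk v w, q.IsPath ∧ (∀ x ∈ q.support, x ∈ S ∪ {w}) ∧ ∀ e ∈ q.edges, e ∉ F := by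
  have hvw : v ≠ w := fun h => hS.1 (h ▸ hv)
  obtain ⟨p, hp, hgood⟩ := fan_pigeonhole hG hvw
    (hF.union (hS.2.image (fun p : V × V => s(p.1, p.2))))
  rcases path_exit p hS.1 hp hv with hin | ⟨x, y, hxy, hx, hy, hyw⟩
  · exact ⟨p, hp, hin, fun e he hf => hgood e he (Or.inl hf)⟩
  · exact absurd (Or.inr ⟨(x, y), ⟨p.adj_of_mem_edges hxy, hx, hy, hyw⟩, rfl⟩) (hgood _ hxy)

lemma immersion_of_family (hG : InfEdgeConn G) {w : V} (D : ℕ → Set V)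
    (hAdm : ∀ k, Adm G w (D k)) (hne : ∀ k, (D k).Nonempty)
    (hdisj : ∀ k l, k ≠ l → Disjoint (D k) (D l)) :
    StronglyImmersed (⊤ : SimpleGraph ℕ) G := by
  classical
  set α : ℕ → V := fun k => (hne k).some with hα
  have hmem : ∀ k, α k ∈ D k := fun k => (hne k).some_mem
  have hwD : ∀ k, w ∉ D k := fun k => (hAdm k).1
  have hleg : ∀ (k : ℕ) (Es : {s : Set (Sym2 V) // s.Finite}),
      ∃ q : G.Walk (α k) w, q.IsPath ∧ (∀ x ∈ q.support, x ∈ D k ∪ {w}) ∧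
        ∀ e ∈ q.edges, e ∉ Es.1 :=
    fun k Es => exists_leg hG (hAdm k) (hmem k) Es.2
  choose leg hleg1 hleg2 hleg3 using hleg
  set i1 : ℕ → ℕ := fun n => (Nat.unpair n).1 with hi1def
  set i2 : ℕ → ℕ := fun n => (Nat.unpair n).2 with hi2def
  set step : ℕ → {s : Set (Sym2 V) // s.Finite} → {s : Set (Sym2 V) // s.Finite} :=
    fun n Es =>
      ⟨(Es.1 ∪ {e | e ∈ (leg (i1 n) Es).edges}) ∪
         {e | e ∈ (leg (i2 n) ⟨Es.1 ∪ {e | e ∈ (leg (i1 n) Es).edges},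
            Es.2.union (leg (i1 n) Es).edges.finite_toSet⟩).edges},
       ((Es.2.union (leg (i1 n) Es).edges.finite_toSet).union
          (leg (i2 n) _).edges.finite_toSet)⟩ with hstep
  set E : ℕ → {s : Set (Sym2 V) // s.Finite} :=
    fun n => Nat.rec ⟨∅, Set.finite_empty⟩ step n with hE
  set Q1 : ∀ n : ℕ, G.Walk (α (i1 n)) w := fun n => leg (i1 n) (E n) with hQ1
  set E1 : ℕ → {s : Set (Sym2 V) // s.Finite} :=
    fun n => ⟨(E n).1 ∪ {e | e ∈ (Q1 n).edges}, (E n).2.union (Q1 n).edges.finite_toSet⟩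
    with hE1
  set Q2 : ∀ n : ℕ, G.Walk (α (i2 n)) w := fun n => leg (i2 n) (E1 n) with hQ2
  have hEsucc : ∀ n, (E (n+1)).1 = ((E n).1 ∪ {e | e ∈ (Q1 n).edges}) ∪ {e | e ∈ (Q2 n).edges} :=
    fun n => rfl
  have hmono : ∀ n, (E n).1 ⊆ (E (n+1)).1 := by
    intro n e he
    rw [hEsucc n]
    exact Or.inl (Or.inl he)
  have hmono' : ∀ m n, m ≤ n → (E m).1 ⊆ (E n).1 := by
    intro m n hmn
    induction n, hmn using Nat.le_induction with
    | base => exact fun _ h => h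
    | succ n hmn ih => exact fun e he => hmono n (ih he)
  -- stage edges
  have hQ1sub : ∀ n, ∀ e ∈ (Q1 n).edges, e ∈ (E (n+1)).1 := by
    intro n e he; rw [hEsucc n]; exact Or.inl (Or.inr he)
  have hQ2sub : ∀ n, ∀ e ∈ (Q2 n).edges, e ∈ (E (n+1)).1 := by
    intro n e he; rw [hEsucc n]; exact Or.inr he
  have hQ1new : ∀ n, ∀ e ∈ (Q1 n).edges, e ∉ (E n).1 := fun n => hleg3 (i1 n) (E n)
  have hQ2new : ∀ n, ∀ e ∈ (Q2 n).edges, e ∉ (E n).1 := by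
    intro n e he hmem'
    exact hleg3 (i2 n) (E1 n) e he (Or.inl hmem')
  -- the stage paths
  set stg : ℕ → ℕ → ℕ := fun i j => Nat.pair i j with hstg
  have hstg1 : ∀ i j, i1 (stg i j) = i := by intro i j; simp [hi1def, hstg, Nat.unpair_pair]
  have hstg2 : ∀ i j, i2 (stg i j) = j := by intro i j; simp [hi2def, hstg, Nat.unpair_pair]
  have hstginj : ∀ i j i' j', stg i j = stg i' j' → i = i' ∧ j = j' := by
    intro i j i' j' h
    have := congrArg Nat.unpair h
    simp only [hstg, Nat.unpair_pair, Prod.mk.injEq] at this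
    exact this
  set pth : ∀ i j : ℕ, G.Walk (α i) (α j) := fun i j =>
    (((Q1 (stg i j)).copy (congrArg α (hstg1 i j)) rfl).append
      (((Q2 (stg i j)).copy (congrArg α (hstg2 i j)) rfl).reverse)).bypass with hpth
  have hpthPath : ∀ i j, (pth i j).IsPath := fun i j => Walk.bypass_isPath _
  have hpthE : ∀ i j, ∀ e ∈ (pth i j).edges,
      e ∈ (Q1 (stg i j)).edges ∨ e ∈ (Q2 (stg i j)).edges := by
    intro i j e he
    have h1 := Walk.edges_bypass_subset _ he
    rw [Walk.edges_append] at h1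
    rcases List.mem_append.mp h1 with h | h
    · rw [Walk.edges_copy] at h; exact Or.inl h
    · rw [Walk.edges_reverse, List.mem_reverse, Walk.edges_copy] at h; exact Or.inr h
  have hpthEsub : ∀ i j, ∀ e ∈ (pth i j).edges, e ∈ (E (stg i j + 1)).1 := by
    intro i j e he
    rcases hpthE i j e he with h | h
    · exact hQ1sub _ e h
    · exact hQ2sub _ e h
  have hpthEnew : ∀ i j, ∀ e ∈ (pth i j).edges, e ∉ (E (stg i j)).1 := by
    intro i j e he
    rcases hpthE i j e he with h | h
    · exact hQ1new _ e h
    · exact hQ2new _ e h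
  have hpthS : ∀ i j, ∀ x ∈ (pth i j).support, x ∈ D i ∪ D j ∪ {w} := by
    intro i j x hx
    have h1 := Walk.support_bypass_subset _ hx
    rw [Walk.support_append] at h1
    rcases List.mem_append.mp h1 with h | h
    · rw [Walk.support_copy] at h
      rcases hleg2 _ _ x h with h' | h'
      · rw [hstg1] at h'; exact Or.inl (Or.inl h')
      · exact Or.inr h'
    · have h2 : x ∈ (((Q2 (stg i j)).copy (congrArg α (hstg2 i j)) rfl).reverse).support :=
        List.mem_of_mem_tail h
      rw [Walk.support_reverse, List.mem_reverse, Walk.support_copy] at h2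
      rcases hleg2 _ _ x h2 with h' | h'
      · rw [hstg2] at h'; exact Or.inl (Or.inr h')
      · exact Or.inr h'
  have hdisjStage : ∀ i j i' j', stg i j ≠ stg i' j' →
      ∀ e ∈ (pth i j).edges, e ∉ (pth i' j').edges := by
    intro i j i' j' hne' e he he'
    rcases lt_or_gt_of_ne hne' with hlt | hlt
    · exact hpthEnew i' j' e he' (hmono' _ _ hlt (hpthEsub i j e he))
    · exact hpthEnew i j e he (hmono' _ _ hlt (hpthEsub i' j' e he'))
  -- assemble the immersion
  set P : ∀ ⦃u v : ℕ⦄, (⊤ : SimpleGraph ℕ).Adj u v → G.Walk (α u) (α v) :=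
    fun u v _ => if h : u < v then pth u v else (pth v u).reverse with hP
  refine ⟨α, P, ?_, ?_, ?_, ?_⟩
  · intro k l hkl
    by_contra hne'
    exact Set.disjoint_iff.mp (hdisj k l hne') ⟨hmem k, hkl ▸ hmem l⟩
  · intro u v h
    by_cases hlt : u < v
    · simpa [hP, hlt] using hpthPath u v
    · simpa [hP, hlt] using (hpthPath v u).reverse
  · intro u v u' v' h h' hs e he he'
    have hmemP : ∀ (a b : ℕ) (hab : (⊤ : SimpleGraph ℕ).Adj a b) (f : Sym2 V),
        f ∈ (P hab).edges → (f ∈ (pth a b).edges ∨ f ∈ (pth b a).edges) := by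
      intro a b hab f hf
      by_cases hlt : a < b
      · simp only [hP, dif_pos hlt] at hf; exact Or.inl hf
      · simp only [hP, dif_neg hlt, Walk.edges_reverse, List.mem_reverse] at hf
        exact Or.inr hf
    have h1 := hmemP u v h e he
    have h2 := hmemP u' v' h' e he'
    have hsym : ∀ a b a' b' : ℕ, s(a, b) ≠ s(a', b') → stg a b ≠ stg a' b' := by
      intro a b a' b' hab hst
      obtain ⟨h3, h4⟩ := hstginj _ _ _ _ hst
      exact hab (by rw [h3, h4])
    have hs1 : s(u, v) ≠ s(u', v') := hs
    have hs2 : s(u, v) ≠ s(v', u') := fun hh => hs (hh.trans Sym2.eq_swap)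
    have hs3 : s(v, u) ≠ s(u', v') := fun hh => hs (Sym2.eq_swap.trans hh)
    have hs4 : s(v, u) ≠ s(v', u') := fun hh => hs (Sym2.eq_swap.trans (hh.trans Sym2.eq_swap))
    rcases h1 with h1 | h1 <;> rcases h2 with h2 | h2
    · exact hdisjStage _ _ _ _ (hsym _ _ _ _ hs1) e h1 h2
    · exact hdisjStage _ _ _ _ (hsym _ _ _ _ hs2) e h1 h2
    · exact hdisjStage _ _ _ _ (hsym _ _ _ _ hs3) e h1 h2
    · exact hdisjStage _ _ _ _ (hsym _ _ _ _ hs4) e h1 h2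
  · intro u v h x hx hz
    have hsup : ∀ (a b : ℕ) (hab : (⊤ : SimpleGraph ℕ).Adj a b),
        ∀ x ∈ (P hab).support, x ∈ D a ∪ D b ∪ {w} := by
      intro a b hab x hx
      by_cases hlt : a < b
      · simp only [hP, dif_pos hlt] at hx; exact hpthS a b x hx
      · simp only [hP, dif_neg hlt, Walk.support_reverse, List.mem_reverse] at hx
        rcases hpthS b a x hx with (h' | h') | h'
        · exact Or.inl (Or.inr h')
        · exact Or.inl (Or.inl h')
        · exact Or.inr h'
    obtain ⟨z, hzx⟩ := hz
    have hzD : α z ∈ D z := hmem z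
    rcases hsup u v h x hx with (hxu | hxv) | hxw
    · left
      have hzu : z = u := by
        by_contra hne'
        exact Set.disjoint_iff.mp (hdisj z u hne') ⟨hzD, hzx ▸ hxu⟩
      rw [← hzx, hzu]
    · right
      have hzv : z = v := by
        by_contra hne'
        exact Set.disjoint_iff.mp (hdisj z v hne') ⟨hzD, hzx ▸ hxv⟩
      rw [← hzx, hzv]
    · exfalso
      simp only [Set.mem_singleton_iff] at hxw
      exact hwD z (by rw [← hzx] at hxw; rw [hxw] at hzD; exact hzD)

lemma exists_disjoint_family {w : V} (f : ℕ → V) (hf : ∀ n, f n ≠ w)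
    (hsep : ∀ m n, m ≠ n → SepW G w (f m) (f n)) :
    ∃ D : ℕ → Set V, (∀ k, Adm G w (D k)) ∧ (∀ k, (D k).Nonempty) ∧
      ∀ k l, k ≠ l → Disjoint (D k) (D l) := by
  classical
  have hstep : ∀ s : {ZS : Set V × Set ℕ //
      Adm G w ZS.1 ∧ ZS.2.Infinite ∧ ∀ n ∈ ZS.2, f n ∈ ZS.1},
      ∃ t : ({ZS : Set V × Set ℕ //
          Adm G w ZS.1 ∧ ZS.2.Infinite ∧ ∀ n ∈ ZS.2, f n ∈ ZS.1} ×
          {Dk : Set V // Adm G w Dk ∧ Dk.Nonempty}),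
        t.1.1.1 ⊆ s.1.1 ∧ t.2.1 ⊆ s.1.1 ∧ Disjoint t.2.1 t.1.1.1 := by
    rintro ⟨⟨Z, S⟩, hZ, hS, hfZ⟩
    obtain ⟨m, hm⟩ := hS.nonempty
    have hS' : (S \ {m}).Infinite := hS.diff (Set.finite_singleton m)
    obtain ⟨n, hn⟩ := hS'.nonempty
    have hmn : m ≠ n := fun h => hn.2 (by simp [← h])
    obtain ⟨_, _, X, hX, hmX, hnX⟩ := hsep m n hmn
    by_cases hcase : {i | i ∈ S ∧ f i ∈ X}.Infinite
    · refine ⟨⟨⟨⟨Z ∩ X, {i | i ∈ S ∧ f i ∈ X}⟩, hZ.inter hX, hcase,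
        fun i hi => ⟨hfZ i hi.1, hi.2⟩⟩,
        ⟨Z ∩ (X ∪ {w})ᶜ, hZ.inter hX.compl,
          ⟨f n, hfZ n hn.1, by simp [hnX, hf n]⟩⟩⟩,
        Set.inter_subset_left, Set.inter_subset_left, ?_⟩
      rw [Set.disjoint_left]
      rintro x ⟨_, hx2⟩ ⟨_, hx4⟩
      simp only [Set.mem_compl_iff, Set.mem_union, Set.mem_singleton_iff, not_or] at hx2
      exact hx2.1 hx4
    · have hcase2 : {i | i ∈ S ∧ f i ∉ X}.Infinite := by
        by_contra h2
        rw [Set.not_infinite] at hcase h2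
        refine hS ((hcase.union h2).subset ?_)
        intro i hi
        by_cases hx : f i ∈ X
        · exact Or.inl ⟨hi, hx⟩
        · exact Or.inr ⟨hi, hx⟩
      refine ⟨⟨⟨⟨Z ∩ (X ∪ {w})ᶜ, {i | i ∈ S ∧ f i ∉ X}⟩, hZ.inter hX.compl, hcase2,
        fun i hi => ⟨hfZ i hi.1, by simp [hi.2, hf i]⟩⟩,
        ⟨Z ∩ X, hZ.inter hX, ⟨f m, hfZ m hm, hmX⟩⟩⟩,
        Set.inter_subset_left, Set.inter_subset_left, ?_⟩
      rw [Set.disjoint_left]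
      rintro x ⟨_, hx2⟩ ⟨_, hx4⟩
      simp only [Set.mem_compl_iff, Set.mem_union, Set.mem_singleton_iff, not_or] at hx4
      exact hx4.1 hx2
  choose stepF hsub hDsub' hdisj using hstep
  set s0 : {ZS : Set V × Set ℕ // Adm G w ZS.1 ∧ ZS.2.Infinite ∧ ∀ n ∈ ZS.2, f n ∈ ZS.1} :=
    ⟨⟨{w}ᶜ, Set.univ⟩, Adm_top w, Set.infinite_univ, fun n _ => hf n⟩ with hs0
  set st : ℕ → {ZS : Set V × Set ℕ // Adm G w ZS.1 ∧ ZS.2.Infinite ∧ ∀ n ∈ ZS.2, f n ∈ ZS.1} :=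
    fun n => Nat.rec s0 (fun _ s => (stepF s).1) n with hst
  have hstsucc : ∀ n, st (n + 1) = (stepF (st n)).1 := fun n => rfl
  set D : ℕ → Set V := fun k => (stepF (st k)).2.1 with hD
  have hchain : ∀ k l, k ≤ l → (st l).1.1 ⊆ (st k).1.1 := by
    intro k l hkl
    induction l, hkl using Nat.le_induction with
    | base => exact fun _ h => h
    | succ l hkl ih => exact fun x hx => ih ((hstsucc l ▸ hsub (st l)) hx)
  have hDsub : ∀ k, D k ⊆ (st k).1.1 := fun k => hDsub' (st k)
  have key : ∀ k l, k < l → Disjoint (D k) (D l) := by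
    intro k l hkl
    have h1 : Disjoint (D k) ((st (k + 1)).1.1) := hstsucc k ▸ hdisj (st k)
    have h2 : D l ⊆ (st (k + 1)).1.1 := fun x hx => hchain (k + 1) l hkl (hDsub l hx)
    exact h1.mono_right h2
  refine ⟨D, fun k => (stepF (st k)).2.2.1, fun k => (stepF (st k)).2.2.2, ?_⟩
  intro k l hkl
  rcases lt_or_gt_of_ne hkl with h | h
  · exact key k l h
  · exact (key l k h).symm

lemma mem_cls_ne_w {w u v : V} (h : v ∈ cls G w u) : v ≠ w := h.2.1

lemma w_not_mem_cls {w u : V} : w ∉ cls G w u := fun h => h.2.1 rfl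

lemma not_mem_cls_of_sepw {w u v : V} (h : SepW G w u v) : v ∉ cls G w u :=
  fun hv => hv.2.2 h

lemma cls_disj {w u u' : V} (hne : cls G w u ≠ cls G w u') :
    ∀ x, x ∈ cls G w u → x ∉ cls G w u' := by
  intro x hx hx'
  exact hne ((cls_eq_of_eqw hx).trans (cls_eq_of_eqw hx').symm)

/-- Finiteness of the set of classes at any vertex. -/
lemma classes_finite (hG : InfEdgeConn G) (him : ¬ StronglyImmersed (⊤ : SimpleGraph ℕ) G) (w : V) :
    {C : Set V | ∃ u, u ≠ w ∧ C = cls G w u}.Finite := by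
  by_contra hinf
  have hinf2 : {C : Set V | ∃ u, u ≠ w ∧ C = cls G w u}.Infinite := hinf
  have emb := hinf2.natEmbedding
  have hrep : ∀ n : ℕ, ∃ u, u ≠ w ∧ (emb n).1 = cls G w u := fun n => (emb n).2
  choose g hg1 hg2 using hrep
  have hsep : ∀ m n, m ≠ n → SepW G w (g m) (g n) := by
    intro m n hmn
    apply sepw_of_not_eqw (hg1 m) (hg1 n)
    intro heq
    have h1 : (emb m).1 = (emb n).1 := by rw [hg2 m, hg2 n, cls_eq_of_eqw heq]
    exact hmn (emb.injective (Subtype.ext h1))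
  obtain ⟨D, h1, h2, h3⟩ := exists_disjoint_family g hg1 hsep
  exact him (immersion_of_family hG D h1 h2 h3)

/-- Every class is admissible. -/
lemma cls_adm (hG : InfEdgeConn G) (him : ¬ StronglyImmersed (⊤ : SimpleGraph ℕ) G) {w u : V} (hu : u ≠ w) :
    Adm G w (cls G w u) := by
  refine ⟨w_not_mem_cls, ?_⟩
  have hfin := classes_finite hG him w
  have hcov : dx G w (cls G w u) ⊆
      ⋃ C ∈ {C : Set V | ∃ v, v ≠ w ∧ C = cls G w v},
        {p : V × V | G.Adj p.1 p.2 ∧ p.1 ∈ cls G w u ∧ p.2 ∈ C ∧ p.2 ∉ cls G w u ∧ p.2 ≠ w} := by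
    rintro ⟨a, b⟩ ⟨hadj, ha, hb, hbw⟩
    refine Set.mem_biUnion ⟨b, hbw, rfl⟩ ⟨hadj, ha, mem_cls_self hbw, hb, hbw⟩
  refine (Set.Finite.biUnion hfin ?_).subset hcov
  rintro C ⟨v, hv, rfl⟩
  by_cases heq : EqW G w u v
  · refine Set.finite_empty.subset ?_
    rintro p ⟨_, _, hp2, hp2', _⟩
    rw [← cls_eq_of_eqw heq] at hp2
    exact (hp2' hp2).elim
  · obtain ⟨_, _, X, hX, huX, hvX⟩ := sepw_of_not_eqw hu hv heq
    apply hX.2.subset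
    rintro ⟨a, b⟩ ⟨hadj, ha, hb, _, hbw⟩
    refine ⟨hadj, cls_subset_of_adm hX huX hu ha, fun hbX => ?_, hbw⟩
    exact hb.2.2 (SepW.symm ⟨hbw, hv, X, hX, hbX, hvX⟩)

lemma sepw_of_unitary {w : V} {A B : Set V} (hU : IsUnitaryCSep G A B w) {a b : V}
    (ha : a ∈ A \ B) (hb : b ∈ B \ A) : SepW G w a b := by
  obtain ⟨⟨hun, hAB, hBA, hABfin, hcross⟩, hsep⟩ := hU
  have hwAB : w ∈ A ∩ B := by rw [hsep]; rfl
  have hwA : w ∈ A := hwAB.1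
  have hwB : w ∈ B := hwAB.2
  refine ⟨fun h => ha.2 (h ▸ hwB), fun h => hb.2 (h ▸ hwA), A \ {w},
    ⟨by simp, hcross.subset ?_⟩, ⟨ha.1, fun h => ha.2 (h ▸ hwB)⟩,
    fun h => hb.2 h.1⟩
  rintro ⟨x, y⟩ ⟨hadj, hx, hy, hyw⟩
  have hxB : x ∉ B := by
    intro hxB
    have : x ∈ A ∩ B := ⟨hx.1, hxB⟩
    rw [hsep] at this
    exact hx.2 this
  have hyA : y ∉ A := by
    intro hyA
    exact hy ⟨hyA, hyw⟩
  have hyB : y ∈ B := by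
    have : y ∈ A ∪ B := hun ▸ Set.mem_univ y
    rcases this with h | h
    · exact (hyA h).elim
    · exact h
  exact ⟨hadj, ⟨hx.1, hxB⟩, hyB, hyA⟩

lemma sepw_of_seppair {w : V} {A B : Set V} (hU : IsUnitaryCSep G A B w) {u v : V}
    (hp : SepPair A B u v) : SepW G w u v := by
  rcases hp with ⟨h1, h2⟩ | ⟨h1, h2⟩
  · exact sepw_of_unitary hU h1 h2
  · exact SepW.symm (sepw_of_unitary hU h2 h1)

lemma unitary_of_adm {w : V} {X : Set V} (hX : Adm G w X) (hne : X.Nonempty)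
    (hne' : (X ∪ {w})ᶜ.Nonempty) : IsUnitaryCSep G (X ∪ {w}) Xᶜ w := by
  have hAB : (X ∪ {w}) ∩ Xᶜ = {w} := by
    ext x
    constructor
    · rintro ⟨h1 | h1, h2⟩
      · exact (h2 h1).elim
      · exact h1
    · rintro rfl
      exact ⟨Or.inr rfl, hX.1⟩
  refine ⟨⟨?_, ?_, ?_, ?_, ?_⟩, hAB⟩
  · ext x
    simp only [Set.mem_union, Set.mem_compl_iff, Set.mem_univ, iff_true, Set.mem_singleton_iff]
    by_cases hx : x ∈ X
    · exact Or.inl (Or.inl hx)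
    · exact Or.inr hx
  · obtain ⟨x, hx⟩ := hne
    exact ⟨x, Or.inl hx, not_not_intro hx⟩
  · obtain ⟨y, hy⟩ := hne'
    simp only [Set.mem_compl_iff, Set.mem_union, Set.mem_singleton_iff, not_or] at hy
    exact ⟨y, hy.1, fun h => (not_or.mpr hy) h⟩
  · rw [hAB]; exact Set.finite_singleton w
  · apply hX.2.subset
    rintro ⟨a, b⟩ ⟨hadj, ha, hb⟩
    have haX : a ∈ X := not_not.mp ha.2
    have hbX : b ∉ X := hb.1
    have hbw : b ≠ w := fun h => hb.2 (Or.inr h)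
    exact ⟨hadj, haX, hbX, hbw⟩

/-- The petal of the class of `u` at `w`. -/
def petal (G : SimpleGraph V) (w u : V) : Set V × Set V :=
  (cls G w u ∪ {w}, (cls G w u)ᶜ)

lemma petal_inter {w u : V} : (petal G w u).1 ∩ (petal G w u).2 = {w} := by
  ext x
  constructor
  · rintro ⟨h1 | h1, h2⟩
    · exact (h2 h1).elim
    · exact h1
  · rintro rfl
    exact ⟨Or.inr rfl, w_not_mem_cls⟩

lemma exists_outside_cls {w u : V} (hcut : IsCompoundCutvertex G w) (hu : u ≠ w) :
    ∃ v, v ≠ w ∧ v ∉ cls G w u := by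
  obtain ⟨A, B, hU⟩ := hcut
  obtain ⟨a, ha⟩ := hU.1.2.1
  obtain ⟨b, hb⟩ := hU.1.2.2.1
  have hsep := sepw_of_unitary hU ha hb
  by_cases hain : a ∈ cls G w u
  · refine ⟨b, hsep.2.1, fun hbin => ?_⟩
    exact (EqW.trans (EqW.symm hain) hbin).2.2 hsep
  · exact ⟨a, hsep.1, hain⟩

lemma petal_unitary (hG : InfEdgeConn G) (him : ¬ StronglyImmersed (⊤ : SimpleGraph ℕ) G) {w u : V}
    (hcut : IsCompoundCutvertex G w) (hu : u ≠ w) :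
    IsUnitaryCSep G (petal G w u).1 (petal G w u).2 w := by
  obtain ⟨v, hv, hvout⟩ := exists_outside_cls hcut hu
  refine unitary_of_adm (cls_adm hG him hu) ⟨u, mem_cls_self hu⟩ ⟨v, ?_⟩
  simp only [Set.mem_compl_iff, Set.mem_union, Set.mem_singleton_iff, not_or]
  exact ⟨hvout, hv⟩

/-- Nestedness of petals at distinct vertices. -/
lemma petal_nested (hG : InfEdgeConn G) (him : ¬ StronglyImmersed (⊤ : SimpleGraph ℕ) G) {w w' u u' : V}
    (hu : u ≠ w) (hu' : u' ≠ w') (hww' : w ≠ w') :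
    NestedSep (petal G w u) (petal G w' u') := by
  set C := cls G w u with hC
  set D := cls G w' u' with hD
  have hCadm : Adm G w C := cls_adm hG him hu
  have hDadm : Adm G w' D := cls_adm hG him hu'
  have hCsw : (Prod.swap '' dx G w C).Finite := hCadm.2.image _
  have hDsw : (Prod.swap '' dx G w' D).Finite := hDadm.2.image _
  by_cases hwD : w ∈ D <;> by_cases hw'C : w' ∈ C
  · -- w ∈ D, w' ∈ C : Cᶜ ∩ Dᶜ = ∅, fourth disjunct
    have hK : Cᶜ ∩ Dᶜ = ∅ := by
      apply eq_empty_of_finite_bdry hG ((hCsw.union hDsw).subset ?_) ⟨w, fun h => h.2 hwD⟩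
      rintro ⟨a, b⟩ ⟨hadj, ⟨haC, haD⟩, hb⟩
      simp only [Set.mem_inter_iff, Set.mem_compl_iff, not_and, not_not] at hb
      have haw : a ≠ w := fun h => haD (h ▸ hwD)
      have haw' : a ≠ w' := fun h => haC (h ▸ hw'C)
      by_cases hbC : b ∈ C
      · exact Or.inl ⟨(b, a), ⟨hadj.symm, hbC, haC, haw⟩, rfl⟩
      · exact Or.inr ⟨(b, a), ⟨hadj.symm, hb hbC, haD, haw'⟩, rfl⟩
    refine Or.inr (Or.inr (Or.inr ⟨?_, ?_⟩))
    · intro x hx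
      simp only [petal] at hx ⊢
      by_cases hxD : x ∈ D
      · exact Or.inl hxD
      · have : x ∈ Cᶜ ∩ Dᶜ := ⟨hx, hxD⟩
        rw [hK] at this
        exact this.elim
    · intro x hx
      simp only [petal, Set.mem_compl_iff] at hx ⊢
      by_cases hxC : x ∈ C
      · exact Or.inl hxC
      · have : x ∈ Cᶜ ∩ Dᶜ := ⟨hxC, hx⟩
        rw [hK] at this
        exact this.elim
  · -- w ∈ D, w' ∉ C : C ∩ Dᶜ = ∅ so C ⊆ D, first disjunct
    have hK : C ∩ Dᶜ = ∅ := by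
      apply eq_empty_of_finite_bdry hG ((hCadm.2.union hDsw).subset ?_)
        ⟨w, fun h => w_not_mem_cls h.1⟩
      rintro ⟨a, b⟩ ⟨hadj, ⟨haC, haD⟩, hb⟩
      simp only [Set.mem_inter_iff, Set.mem_compl_iff, not_and, not_not] at hb
      have haw' : a ≠ w' := fun h => hw'C (h ▸ haC)
      by_cases hbC : b ∈ C
      · exact Or.inr ⟨(b, a), ⟨hadj.symm, hb hbC, haD, haw'⟩, rfl⟩
      · by_cases hbw : b = w
        · exact Or.inr ⟨(b, a), ⟨hadj.symm, hbw ▸ hwD, haD, haw'⟩, rfl⟩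
        · exact Or.inl ⟨hadj, haC, hbC, hbw⟩
    have hCD : C ⊆ D := by
      intro x hx
      by_contra hxD
      have : x ∈ C ∩ Dᶜ := ⟨hx, hxD⟩
      rw [hK] at this
      exact this.elim
    refine Or.inl ⟨?_, ?_⟩
    · rintro x (hx | hx)
      · exact Or.inl (hCD hx)
      · exact Or.inl (hx ▸ hwD)
    · intro x hx
      simp only [petal, Set.mem_compl_iff] at hx ⊢
      exact fun hxC => hx (hCD hxC)
  · -- w ∉ D, w' ∈ C : D ∩ Cᶜ = ∅ so D ⊆ C, second disjunct
    have hK : D ∩ Cᶜ = ∅ := by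
      apply eq_empty_of_finite_bdry hG ((hDadm.2.union hCsw).subset ?_)
        ⟨w', fun h => w_not_mem_cls h.1⟩
      rintro ⟨a, b⟩ ⟨hadj, ⟨haD, haC⟩, hb⟩
      simp only [Set.mem_inter_iff, Set.mem_compl_iff, not_and, not_not] at hb
      have haw : a ≠ w := fun h => hwD (h ▸ haD)
      by_cases hbD : b ∈ D
      · exact Or.inr ⟨(b, a), ⟨hadj.symm, hb hbD, haC, haw⟩, rfl⟩
      · by_cases hbw' : b = w'
        · exact Or.inr ⟨(b, a), ⟨hadj.symm, hbw' ▸ hw'C, haC, haw⟩, rfl⟩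
        · exact Or.inl ⟨hadj, haD, hbD, hbw'⟩
    have hDC : D ⊆ C := by
      intro x hx
      by_contra hxC
      have : x ∈ D ∩ Cᶜ := ⟨hx, hxC⟩
      rw [hK] at this
      exact this.elim
    refine Or.inr (Or.inl ⟨?_, ?_⟩)
    · rintro x (hx | hx)
      · exact Or.inl (hDC hx)
      · exact Or.inl (hx ▸ hw'C)
    · intro x hx
      simp only [petal, Set.mem_compl_iff] at hx ⊢
      exact fun hxD => hx (hDC hxD)
  · -- w ∉ D, w' ∉ C : C ∩ D = ∅, third disjunct
    have hK : C ∩ D = ∅ := by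
      apply eq_empty_of_finite_bdry hG ((hCadm.2.union hDadm.2).subset ?_)
        ⟨w, fun h => w_not_mem_cls h.1⟩
      rintro ⟨a, b⟩ ⟨hadj, ⟨haC, haD⟩, hb⟩
      simp only [Set.mem_inter_iff, not_and] at hb
      by_cases hbC : b ∈ C
      · have hbD : b ∉ D := hb hbC
        have hbw' : b ≠ w' := fun h => hw'C (h ▸ hbC)
        exact Or.inr ⟨hadj, haD, hbD, hbw'⟩
      · by_cases hbw : b = w
        · exact Or.inr ⟨hadj, haD, fun h => hwD (hbw ▸ h), fun h => hww' (hbw.symm.trans h)⟩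
        · exact Or.inl ⟨hadj, haC, hbC, hbw⟩
    refine Or.inr (Or.inr (Or.inl ⟨?_, ?_⟩))
    · rintro x (hx | hx)
      · simp only [petal, Set.mem_compl_iff]
        intro hxD
        have : x ∈ C ∩ D := ⟨hx, hxD⟩
        rw [hK] at this
        exact this.elim
      · simp only [petal, Set.mem_compl_iff]
        exact hx ▸ hwD
    · rintro x (hx | hx)
      · simp only [petal, Set.mem_compl_iff]
        intro hxC
        have : x ∈ C ∩ D := ⟨hxC, hx⟩
        rw [hK] at this
        exact this.elim
      · simp only [petal, Set.mem_compl_iff]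
        exact hx ▸ hw'C

end St14

open St14

/-- an infinitely edge-connected graph with no strongly immersed
`K^{ℵ₀}` has a nested set of unitary compound-separations faithful to it. -/
theorem exists_faithful_nested_set {V : Type*} (G : SimpleGraph V)
    (hG : InfEdgeConn G) (him : ¬ StronglyImmersed (⊤ : SimpleGraph ℕ) G) :
    ∃ N : Set (Set V × Set V),
      (∀ s ∈ N, ∃ w, IsUnitaryCSep G s.1 s.2 w) ∧
      (∀ s ∈ N, ∀ t ∈ N, NestedSep s t) ∧
      FaithfulSet G N := by
  classical
  set N : Set (Set V × Set V) :=
    {s | ∃ w u : V, IsCompoundCutvertex G w ∧ u ≠ w ∧ s = petal G w u} with hNdef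
  have hALL : ∀ s ∈ N, ∃ w, IsUnitaryCSep G s.1 s.2 w := by
    rintro s ⟨w, u, hcut, hu, rfl⟩
    exact ⟨w, petal_unitary hG him hcut hu⟩
  refine ⟨N, hALL, ?_, ?_⟩
  · rintro s ⟨w, u, hcut, hu, rfl⟩ t ⟨w', u', hcut', hu', rfl⟩
    by_cases hww' : w = w'
    · subst hww'
      by_cases hcl : cls G w u = cls G w u'
      · have hpe : petal G w u = petal G w u' := by
          simp only [petal, hcl]
        rw [hpe]
        exact Or.inl ⟨Set.Subset.rfl, Set.Subset.rfl⟩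
      · refine Or.inr (Or.inr (Or.inl ⟨?_, ?_⟩))
        · rintro x (hx | hx)
          · exact cls_disj hcl x hx
          · exact hx ▸ w_not_mem_cls
        · rintro x (hx | hx)
          · exact cls_disj (fun h => hcl h.symm) x hx
          · exact hx ▸ w_not_mem_cls
    · exact petal_nested hG him hu hu' hww'
  · intro w hcut
    have hchar : ∀ s, (s ∈ N ∧ s.1 ∩ s.2 = {w}) ↔ ∃ u, u ≠ w ∧ s = petal G w u := by
      intro s
      constructor
      · rintro ⟨⟨w0, u0, hcut0, hu0, rfl⟩, hint⟩
        rw [petal_inter] at hint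
        have hw0 : w0 = w := by
          have := Set.singleton_eq_singleton_iff.mp hint
          exact this
        exact ⟨u0, hw0 ▸ hu0, by rw [hw0]⟩
      · rintro ⟨u, hu, rfl⟩
        exact ⟨⟨w, u, hcut, hu, rfl⟩, petal_inter⟩
    constructor
    · -- star orientation
      by_cases hsw : ∃ s, s ∈ {s ∈ N | s.1 ∩ s.2 = {w}} ∧
          swapSep s ∈ {s ∈ N | s.1 ∩ s.2 = {w}}
      · obtain ⟨s, hs, hss⟩ := hsw
        obtain ⟨y, hy, hsy⟩ := (hchar s).mp ⟨hs.1, hs.2⟩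
        obtain ⟨z, hz, hsz⟩ := (hchar (swapSep s)).mp ⟨hss.1, hss.2⟩
        have h1 : (cls G w y)ᶜ = cls G w z ∪ {w} := by
          have := congrArg Prod.fst hsz
          simp only [swapSep, hsy, petal] at this ⊢
          exact this
        have h2 : cls G w y ∪ {w} = (cls G w z)ᶜ := by
          have := congrArg Prod.snd hsz
          simp only [swapSep, hsy, petal] at this ⊢
          exact this
        refine ⟨{s}, ?_, ?_, ?_, ?_⟩
        · intro t ht
          obtain ⟨x, hx, htx⟩ := (hchar t).mp ⟨ht.1, ht.2⟩
          by_cases hcl : cls G w x = cls G w y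
          · left
            rw [htx, hsy]
            simp only [petal, hcl, Set.mem_singleton_iff]
          · right
            have hxz : x ∈ cls G w z := by
              have hxy : x ∉ cls G w y := cls_disj hcl x (mem_cls_self hx)
              have : x ∈ (cls G w y)ᶜ := hxy
              rw [h1] at this
              rcases this with h | h
              · exact h
              · exact absurd h hx
            have hclz : cls G w x = cls G w z := (cls_eq_of_eqw hxz).symm
            rw [htx, hsy]
            simp only [swapSep, petal, Set.mem_singleton_iff, Prod.mk.injEq]
            constructor
            · rw [hclz, ← h2]
            · rw [hclz, ← h1]
        · intro t ht hc
          simp only [Set.mem_singleton_iff] at hc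
          have hts : t = s := hc.1
          have hswts : swapSep t = s := hc.2
          rw [hts] at hswts
          have hss1 : s.1 = s.2 := congrArg Prod.snd hswts
          rw [hsy] at hss1
          simp only [petal] at hss1
          have : y ∈ cls G w y ∪ {w} := Or.inl (mem_cls_self hy)
          rw [hss1] at this
          exact this (mem_cls_self hy)
        · intro t ht
          simp only [Set.mem_singleton_iff] at ht
          exact Or.inl (ht ▸ ⟨hs.1, hs.2⟩)
        · intro a ha b hb hab
          simp only [Set.mem_singleton_iff] at ha hb
          exact absurd (ha.trans hb.symm) hab
      · refine ⟨{s ∈ N | s.1 ∩ s.2 = {w}}, ?_, ?_, ?_, ?_⟩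
        · exact fun s hs => Or.inl hs
        · intro s hs hc
          exact hsw ⟨s, hc.1, hc.2⟩
        · exact fun t ht => Or.inl ht
        · intro a ha b hb hab
          obtain ⟨x, hx, hax⟩ := (hchar a).mp ⟨ha.1, ha.2⟩
          obtain ⟨y, hy, hby⟩ := (hchar b).mp ⟨hb.1, hb.2⟩
          have hcl : cls G w x ≠ cls G w y := by
            intro h
            apply hab
            rw [hax, hby]
            simp only [petal, h]
          rw [hax, hby]
          constructor
          · rintro t (ht | ht)
            · exact cls_disj hcl t ht
            · exact ht ▸ w_not_mem_cls
          · rintro t (ht | ht)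
            · exact cls_disj (fun h => hcl h.symm) t ht
            · exact ht ▸ w_not_mem_cls
    · rintro u v ⟨A, B, hU, hsp⟩
      have hsep := sepw_of_seppair hU hsp
      refine ⟨petal G w u, ⟨w, u, hcut, hsep.1, rfl⟩, petal_inter, Or.inl ⟨⟨?_, ?_⟩, ?_, ?_⟩⟩
      · exact Or.inl (mem_cls_self hsep.1)
      · exact fun h => h (mem_cls_self hsep.1)
      · exact not_mem_cls_of_sepw hsep
      · rintro (h | h)
        · exact not_mem_cls_of_sepw hsep h
        · exact hsep.2.1 h
end
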